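/- Let $x,y,z \in W$ with $x*y=z$, where $*$ is the Demazure product, and set $y' = x^{-1}z$. Then $y' \le_L z$, $\ell(z) = \ell(x) + \ell(y')$, and $y' \le y$ in the Bruhat order. -/

import Mathlib

namespace PaperStmt

open scoped Classical

variable {B : Type*} {W : Type*} [Group W] {M : CoxeterMatrix B}

/-- Bruhat (strong) cover: `v = t * u` for a reflection `t`, with `ℓ v = ℓ u + 1`. -/
def BruhatCov (cs : CoxeterSystem M W) (u v : W) : Prop :=
  cs.length v = cs.length u + 1 ∧ ∃ t : W, cs.IsReflection t ∧ v = t * u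

/-- The Bruhat (strong) order, generated by the covering relations. -/
def BruhatLe (cs : CoxeterSystem M W) : W → W → Prop :=
  Relation.ReflTransGen (BruhatCov cs)

/-- Strict Bruhat order. -/
def BruhatLt (cs : CoxeterSystem M W) (u v : W) : Prop :=
  BruhatLe cs u v ∧ u ≠ v

/-- Left weak order: `u ≤_L v` iff `ℓ(v u⁻¹) + ℓ u = ℓ v`. -/
def leftLe (cs : CoxeterSystem M W) (u v : W) : Prop :=
  cs.length (v * u⁻¹) + cs.length u = cs.length v

/-- Right weak order: `u ≤_R v` iff `ℓ u + ℓ(u⁻¹ v) = ℓ v`. -/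
def rightLe (cs : CoxeterSystem M W) (u v : W) : Prop :=
  cs.length u + cs.length (u⁻¹ * v) = cs.length v

/-- Demazure action of a simple reflection: `φ_s(x) = s x` if `s x > x`, else `x`. -/
noncomputable def phi (cs : CoxeterSystem M W) (i : B) (x : W) : W :=
  if BruhatLt cs x (cs.simple i * x) then cs.simple i * x else x

/-- Anti-Demazure action: `ψ_s(x) = s x` if `s x < x`, else `x`. -/
noncomputable def psi (cs : CoxeterSystem M W) (i : B) (x : W) : W :=
  if BruhatLt cs (cs.simple i * x) x then cs.simple i * x else x

/-- Right anti-Demazure action: `ψ^R_s(x) = x s` if `x s < x`, else `x`. -/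
noncomputable def psiR (cs : CoxeterSystem M W) (i : B) (x : W) : W :=
  if BruhatLt cs (x * cs.simple i) x then x * cs.simple i else x

/-- `φ_w` along a word `w = s_1 ⋯ s_n`: `φ_{s_1} ∘ ⋯ ∘ φ_{s_n}`. -/
noncomputable def phiWord (cs : CoxeterSystem M W) (ω : List B) (x : W) : W :=
  ω.foldr (phi cs) x

/-- `ψ_w` along a word `w = s_1 ⋯ s_n`: `ψ_{s_1} ∘ ⋯ ∘ ψ_{s_n}`. -/
noncomputable def psiWord (cs : CoxeterSystem M W) (ω : List B) (x : W) : W :=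
  ω.foldr (psi cs) x

/-- `ψ^R_w` along a word `w = s_1 ⋯ s_n`: `ψ^R_{s_n} ∘ ⋯ ∘ ψ^R_{s_1}`. -/
noncomputable def psiRWord (cs : CoxeterSystem M W) (ω : List B) (x : W) : W :=
  ω.foldl (fun y i => psiR cs i y) x

namespace ExchAux

open List

variable (cs : CoxeterSystem M W)

/-- The sign-flipping involution attached to a simple reflection. -/
noncomputable def sigmaFun (i : B) : W × ℤˣ → W × ℤˣ :=
  fun p => (cs.simple i * p.1 * cs.simple i, if p.1 = cs.simple i then -p.2 else p.2)

lemma conj_simple_eq_iff (i : B) (t : W) :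
    cs.simple i * t * cs.simple i = cs.simple i ↔ t = cs.simple i := by
  constructor
  · intro h
    have := congrArg (fun w => cs.simple i * w * cs.simple i) h
    simpa [mul_assoc, cs.simple_mul_simple_self, cs.simple_mul_simple_cancel_left] using this
  · rintro rfl
    simp [mul_assoc, cs.simple_mul_simple_self]

lemma sigmaFun_involutive (i : B) : Function.Involutive (sigmaFun cs i) := by
  intro p
  unfold sigmaFun
  ext
  · simp [mul_assoc, cs.simple_mul_simple_self, cs.simple_mul_simple_cancel_left]
  · simp only
    rw [conj_simple_eq_iff]
    split_ifs with h
    · simp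
    · rfl

/-- The permutation of `W × ℤˣ` attached to a simple reflection. -/
noncomputable def sigma (i : B) : Equiv.Perm (W × ℤˣ) :=
  Function.Involutive.toPerm _ (sigmaFun_involutive cs i)

lemma sigma_apply (i : B) (p : W × ℤˣ) :
    sigma cs i p = (cs.simple i * p.1 * cs.simple i,
      if p.1 = cs.simple i then -p.2 else p.2) := rfl

lemma rightInvSeq_cons (i : B) (ω : List B) :
    cs.rightInvSeq (i :: ω) =
      ((cs.wordProd ω)⁻¹ * cs.simple i * cs.wordProd ω) :: cs.rightInvSeq ω := rfl

lemma prod_sigma_apply (ω : List B) (t : W) (ε : ℤˣ) :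
    (ω.map (sigma cs)).prod (t, ε) =
      (cs.wordProd ω * t * (cs.wordProd ω)⁻¹,
        (-1) ^ ((cs.rightInvSeq ω).count t) * ε) := by
  induction ω with
  | nil => simp
  | cons i ω ih =>
    rw [map_cons, prod_cons, Equiv.Perm.mul_apply, ih, sigma_apply]
    have hcond : (cs.wordProd ω * t * (cs.wordProd ω)⁻¹ = cs.simple i) ↔
        (t = (cs.wordProd ω)⁻¹ * cs.simple i * cs.wordProd ω) := by
      constructor
      · intro h
        have := congrArg (fun w => (cs.wordProd ω)⁻¹ * w * cs.wordProd ω) h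
        simpa [mul_assoc] using this
      · intro h
        rw [h]
        simp [mul_assoc]
    ext
    · simp [cs.wordProd_cons, mul_assoc, mul_inv_rev, cs.inv_simple]
    · simp only
      rw [hcond, rightInvSeq_cons, List.count_cons]
      simp only [beq_iff_eq]
      split_ifs with h h2 h2
      · simp [pow_succ, mul_assoc, mul_neg, neg_mul]
      · exact absurd h.symm h2
      · exact absurd h2.symm h
      · simp

/-- The word `[i, j, i, j, ...]` of length `2 * m`. -/
def altW (i j : B) : ℕ → List B
  | 0 => []
  | m + 1 => i :: j :: altW i j m

lemma wordProd_altW (i j : B) (m : ℕ) :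
    cs.wordProd (altW i j m) = (cs.simple i * cs.simple j) ^ m := by
  induction m with
  | zero => simp [altW]
  | succ m ih =>
    rw [altW, cs.wordProd_cons, cs.wordProd_cons, ih, pow_succ']
    rw [mul_assoc]

lemma simple_mul_pow_conj (i j : B) (a : ℕ) :
    cs.simple j * (cs.simple i * cs.simple j) ^ a * cs.simple j =
      ((cs.simple i * cs.simple j) ^ a)⁻¹ := by
  have h1 : MulAut.conj (cs.simple j) (cs.simple i * cs.simple j) =
      (cs.simple i * cs.simple j)⁻¹ := by
    simp [MulAut.conj_apply, mul_inv_rev, cs.inv_simple, mul_assoc,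
      cs.simple_mul_simple_cancel_left, cs.simple_mul_simple_self]
  have := congrArg (fun f : MulAut W => f ((cs.simple i * cs.simple j) ^ a))
    (rfl : MulAut.conj (cs.simple j) = MulAut.conj (cs.simple j))
  have h2 : MulAut.conj (cs.simple j) ((cs.simple i * cs.simple j) ^ a) =
      ((cs.simple i * cs.simple j) ^ a)⁻¹ := by
    rw [map_pow, h1, inv_pow]
  simpa [MulAut.conj_apply, cs.inv_simple, mul_assoc] using h2

lemma simple_mul_pow_swap (i j : B) (a : ℕ) :
    cs.simple j * (cs.simple i * cs.simple j) ^ a =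
      ((cs.simple i * cs.simple j) ^ a)⁻¹ * cs.simple j := by
  have := congrArg (· * cs.simple j) (simple_mul_pow_conj cs i j a)
  simpa [mul_assoc, cs.simple_mul_simple_self] using this

lemma ris_altW (i j : B) (m : ℕ) :
    cs.rightInvSeq (altW i j m) =
      ((List.range (2 * m)).reverse).map
        (fun b => cs.simple j * (cs.simple i * cs.simple j) ^ b) := by
  induction m with
  | zero => simp [altW]
  | succ m ih =>
    have hrev : ∀ n : ℕ, (List.range (n + 1)).reverse = n :: (List.range n).reverse := by
      intro n; rw [List.range_succ]; simp
    have h2m : 2 * (m + 1) = (2 * m + 1) + 1 := by ring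
    rw [h2m, hrev, hrev]
    rw [altW, rightInvSeq_cons, rightInvSeq_cons, ih, map_cons, map_cons]
    have hπ : cs.wordProd (altW i j m) = (cs.simple i * cs.simple j) ^ m :=
      wordProd_altW cs i j m
    congr 1
    · -- first entry
      rw [cs.wordProd_cons, hπ]
      have key : cs.simple i * (cs.simple j * (cs.simple i * cs.simple j) ^ m) =
          (cs.simple j * (cs.simple i * cs.simple j) ^ m) *
            (cs.simple j * (cs.simple i * cs.simple j) ^ (2 * m + 1)) := by
        have hrhs : (cs.simple j * (cs.simple i * cs.simple j) ^ m) *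
            (cs.simple j * (cs.simple i * cs.simple j) ^ (2 * m + 1)) =
            (cs.simple j * (cs.simple i * cs.simple j) ^ m * cs.simple j) *
              (cs.simple i * cs.simple j) ^ (2 * m + 1) := by
          simp [mul_assoc]
        rw [hrhs, simple_mul_pow_conj]
        have h2m1 : (2 * m + 1) = m + (m + 1) := by ring
        rw [h2m1, pow_add, inv_mul_cancel_left, ← mul_assoc, ← pow_succ']
      rw [mul_assoc, key, inv_mul_cancel_left]
    congr 1
    · -- second entry
      rw [hπ, mul_assoc, simple_mul_pow_swap cs i j m, simple_mul_pow_swap cs i j (2 * m),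
        ← mul_assoc, ← mul_inv_rev, ← pow_add, two_mul]

lemma count_ris_altW_even (i j : B) (m : ℕ)
    (hp : (cs.simple i * cs.simple j) ^ m = 1) (t : W) :
    Even ((cs.rightInvSeq (altW i j m)).count t) := by
  rw [ris_altW, List.map_reverse, List.count_reverse]
  have hsplit : List.range (2 * m) = List.range m ++ (List.range m).map (m + ·) := by
    rw [two_mul, List.range_add]
  rw [hsplit, List.map_append, List.count_append, List.map_map]
  have hmapeq : (List.range m).map ((fun b => cs.simple j * (cs.simple i * cs.simple j) ^ b)
        ∘ (m + ·)) =
      (List.range m).map (fun b => cs.simple j * (cs.simple i * cs.simple j) ^ b) := by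
    apply List.map_congr_left
    intro b _
    simp only [Function.comp_apply]
    rw [pow_add, hp, one_mul]
  rw [hmapeq]
  exact ⟨_, rfl⟩


lemma prod_sigma_altW (i j : B) (m : ℕ) :
    ((altW i j m).map (sigma cs)).prod = (sigma cs i * sigma cs j) ^ m := by
  induction m with
  | zero => simp [altW]
  | succ m ih =>
    rw [altW, map_cons, map_cons, prod_cons, prod_cons, ih, pow_succ', mul_assoc]

lemma sigma_liftable : M.IsLiftable (sigma cs) := by
  intro i j
  have hp : (cs.simple i * cs.simple j) ^ M i j = 1 := cs.simple_mul_simple_pow i j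
  rw [← prod_sigma_altW]
  apply Equiv.ext
  rintro ⟨t, ε⟩
  rw [prod_sigma_apply, wordProd_altW, hp]
  have heven := count_ris_altW_even cs i j (M i j) hp t
  rw [Equiv.Perm.one_apply, heven.neg_one_pow]
  simp

/-- The sign representation of `W` on `W × ℤˣ`. -/
noncomputable def Phi : W →* Equiv.Perm (W × ℤˣ) :=
  cs.lift ⟨sigma cs, sigma_liftable cs⟩

lemma Phi_simple (i : B) : Phi cs (cs.simple i) = sigma cs i :=
  cs.lift_apply_simple (sigma_liftable cs) i

lemma Phi_wordProd (ω : List B) : Phi cs (cs.wordProd ω) = (ω.map (sigma cs)).prod := by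
  unfold CoxeterSystem.wordProd
  rw [map_list_prod, List.map_map]
  congr 1
  apply List.map_congr_left
  intro b _
  exact Phi_simple cs b

/-- Exchange: if right-multiplying by a simple reflection shortens, that simple reflection
occurs in the right inversion sequence of any reduced word. -/
lemma simple_mem_rightInvSeq {ω : List B} (hred : cs.IsReduced ω) {i : B}
    (h : cs.length (cs.wordProd ω * cs.simple i) < cs.length (cs.wordProd ω)) :
    cs.simple i ∈ cs.rightInvSeq ω := by
  obtain ⟨τ, hτred, hτ⟩ := cs.exists_reduced_word' (cs.wordProd ω * cs.simple i)
  have hπ : cs.wordProd (τ.concat i) = cs.wordProd ω := by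
    rw [cs.wordProd_concat, ← hτ, cs.simple_mul_simple_cancel_right]
  have hprodeq : (ω.map (sigma cs)).prod = ((τ.concat i).map (sigma cs)).prod := by
    rw [← Phi_wordProd, ← Phi_wordProd, hπ]
  have h1 := prod_sigma_apply cs ω (cs.simple i) 1
  rw [hprodeq, prod_sigma_apply cs (τ.concat i) (cs.simple i) 1] at h1
  have hsign := congrArg Prod.snd h1
  simp only at hsign
  -- compute the count in `ris (τ.concat i)`
  have hcount : ((cs.rightInvSeq (τ.concat i)).count (cs.simple i)) =
      (cs.rightInvSeq τ).count (cs.simple i) + 1 := by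
    rw [cs.rightInvSeq_concat]
    rw [List.concat_eq_append, List.count_append]
    have : cs.simple i = (MulAut.conj (cs.simple i)) (cs.simple i) := by
      simp [MulAut.conj_apply, mul_assoc, cs.inv_simple, cs.simple_mul_simple_self]
    have hmapc : ((cs.rightInvSeq τ).map (MulAut.conj (cs.simple i))).count (cs.simple i) =
        (cs.rightInvSeq τ).count (cs.simple i) := by
      nth_rw 1 [this]
      exact List.count_map_of_injective _ _ (MulAut.conj (cs.simple i)).injective _
    rw [hmapc]
    simp
  have hzero : (cs.rightInvSeq τ).count (cs.simple i) = 0 := by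
    rw [List.count_eq_zero]
    intro hmem
    have hinv := (cs.isRightInversion_of_mem_rightInvSeq hτred hmem).2
    rw [← hτ] at hinv
    rw [cs.simple_mul_simple_cancel_right] at hinv
    omega
  rw [hcount, hzero] at hsign
  by_contra hnot
  rw [List.count_eq_zero.mpr hnot] at hsign
  simp at hsign

lemma simple_mem_leftInvSeq {ω : List B} (hred : cs.IsReduced ω) {i : B}
    (h : cs.length (cs.simple i * cs.wordProd ω) < cs.length (cs.wordProd ω)) :
    cs.simple i ∈ cs.leftInvSeq ω := by
  have hred' : cs.IsReduced ω.reverse := (cs.isReduced_reverse_iff ω).mpr hred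
  have h' : cs.length (cs.wordProd ω.reverse * cs.simple i) <
      cs.length (cs.wordProd ω.reverse) := by
    rw [cs.wordProd_reverse, cs.length_inv]
    have : (cs.wordProd ω)⁻¹ * cs.simple i = (cs.simple i * cs.wordProd ω)⁻¹ := by
      rw [mul_inv_rev, cs.inv_simple]
    rw [this, cs.length_inv]
    exact h
  have := simple_mem_rightInvSeq cs hred' h'
  rw [cs.rightInvSeq_reverse] at this
  exact List.mem_reverse.mp this

lemma leftInvSeq_append (α γ : List B) :
    cs.leftInvSeq (α ++ γ) =
      cs.leftInvSeq α ++ (cs.leftInvSeq γ).map (MulAut.conj (cs.wordProd α)) := by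
  induction α with
  | nil => simp [MulAut.conj_apply]
  | cons a α ih =>
    show cs.leftInvSeq (a :: (α ++ γ)) = _
    rw [CoxeterSystem.leftInvSeq, ih, List.map_append, List.map_map]
    rw [CoxeterSystem.leftInvSeq, cs.wordProd_cons]
    rw [List.cons_append]
    congr 1
    congr 1
    apply List.map_congr_left
    intro t _
    simp [MulAut.conj_apply, mul_assoc, mul_inv_rev, cs.inv_simple]

/-- Weak-order lifting: if `s i` lengthens `u` but shortens `u * c`, where lengths of `u` and
`c` add, then `s i * u * c = u * t * c` for a left inversion `t` of `c`. -/
lemma descent_lift (u c : W) (i : B) (h1 : cs.length (cs.simple i * u) = cs.length u + 1)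
    (h2 : cs.length (u * c) = cs.length u + cs.length c)
    (h3 : cs.length (cs.simple i * (u * c)) < cs.length (u * c)) :
    ∃ t : W, cs.IsReflection t ∧ cs.simple i * (u * c) = u * (t * c) ∧
      cs.length (t * c) + 1 = cs.length c := by
  obtain ⟨α, hα, huα⟩ := cs.exists_reduced_word' u
  obtain ⟨γ, hγ, hcγ⟩ := cs.exists_reduced_word' c
  have hπ : cs.wordProd (α ++ γ) = u * c := by rw [cs.wordProd_append, ← huα, ← hcγ]
  have hredαγ : cs.IsReduced (α ++ γ) := by
    unfold CoxeterSystem.IsReduced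
    rw [hπ, h2, List.length_append]
    rw [CoxeterSystem.IsReduced] at hα hγ
    rw [← huα] at hα
    rw [← hcγ] at hγ
    omega
  have hmem : cs.simple i ∈ cs.leftInvSeq (α ++ γ) := by
    apply simple_mem_leftInvSeq cs hredαγ
    rw [hπ]
    exact h3
  rw [leftInvSeq_append, List.mem_append] at hmem
  rcases hmem with hmem | hmem
  · exfalso
    have := (cs.isLeftInversion_of_mem_leftInvSeq hα hmem).2
    rw [← huα] at this
    omega
  · rw [List.mem_map] at hmem
    obtain ⟨t, htmem, hteq⟩ := hmem
    rw [← huα, MulAut.conj_apply] at hteq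
    refine ⟨t, cs.isReflection_of_mem_leftInvSeq γ htmem, ?_, ?_⟩
    · rw [← hteq]
      group
    · have htc : cs.length (t * c) < cs.length c := by
        have := (cs.isLeftInversion_of_mem_leftInvSeq hγ htmem).2
        rwa [← hcγ] at this
      have hlow : cs.length (u * c) - 1 ≤ cs.length (u * (t * c)) := by
        have heq : cs.simple i * (u * c) = u * (t * c) := by rw [← hteq]; group
        have := cs.length_mul_ge_length_sub_length' (cs.simple i) (u * c)
        rw [heq, cs.length_simple] at this
        omega
      have hup : cs.length (u * (t * c)) ≤ cs.length u + cs.length (t * c) :=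
        cs.length_mul_le u (t * c)
      omega

end ExchAux

open ExchAux

section MainAux

variable {cs : CoxeterSystem M W}

lemma length_le_of_bruhatLe {u v : W} (h : BruhatLe cs u v) :
    cs.length u ≤ cs.length v := by
  induction h with
  | refl => exact le_rfl
  | tail _ hcov ih =>
    have := hcov.1
    omega

lemma bruhatLt_simple_mul_iff (x : W) (i : B) :
    BruhatLt cs x (cs.simple i * x) ↔ cs.length (cs.simple i * x) = cs.length x + 1 := by
  constructor
  · rintro ⟨hle, hne⟩
    have h1 := length_le_of_bruhatLe hle
    rcases cs.length_simple_mul x i with h | h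
    · exact h
    · exfalso
      have : cs.length (cs.simple i * x) = cs.length x := by omega
      have hne2 := cs.length_simple_mul_ne x i
      exact hne2 this
  · intro h
    refine ⟨Relation.ReflTransGen.single ⟨h, cs.simple i, cs.isReflection_simple i, rfl⟩, ?_⟩
    intro he
    rw [← he] at h
    omega

lemma phi_eq (i : B) (x : W) :
    phi cs i x = if cs.length (cs.simple i * x) = cs.length x + 1
      then cs.simple i * x else x := by
  unfold phi
  exact if_congr (bruhatLt_simple_mul_iff x i) rfl rfl

lemma main_aux (ω : List B) (hred : cs.IsReduced ω) (y : W) :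
    cs.length (phiWord cs ω y) =
        cs.length (cs.wordProd ω) +
          cs.length ((cs.wordProd ω)⁻¹ * phiWord cs ω y) ∧
      BruhatLe cs ((cs.wordProd ω)⁻¹ * phiWord cs ω y) y := by
  induction ω with
  | nil =>
    constructor
    · simp [phiWord]
    · simp only [phiWord, List.foldr_nil, cs.wordProd_nil, inv_one, one_mul]
      exact Relation.ReflTransGen.refl
  | cons i ω ih =>
    -- basic facts about the reduced word `i :: ω`
    have hlen : cs.length (cs.simple i * cs.wordProd ω) = ω.length + 1 := by
      have := hred
      rw [CoxeterSystem.IsReduced, cs.wordProd_cons] at this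
      simpa using this
    have hred' : cs.IsReduced ω := by
      rw [CoxeterSystem.IsReduced]
      have hub := cs.length_wordProd_le ω
      rcases cs.length_simple_mul (cs.wordProd ω) i with h | h <;> omega
    have hu1 : cs.length (cs.simple i * cs.wordProd ω) = cs.length (cs.wordProd ω) + 1 := by
      rw [hlen, hred']
    obtain ⟨ihlen, ihle⟩ := ih hred'
    set u := cs.wordProd ω with hu
    set z' := phiWord cs ω y with hz'
    have hphiw : phiWord cs (i :: ω) y = phi cs i z' := rfl
    have hπcons : cs.wordProd (i :: ω) = cs.simple i * u := cs.wordProd_cons i ω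
    rcases cs.length_simple_mul z' i with hA | hB
    · -- `s i` lengthens `z'`; the Demazure product multiplies
      have hphi : phiWord cs (i :: ω) y = cs.simple i * z' := by
        rw [hphiw, phi_eq, if_pos hA]
      have hcancel : (cs.wordProd (i :: ω))⁻¹ * phiWord cs (i :: ω) y = u⁻¹ * z' := by
        rw [hphi, hπcons, mul_inv_rev, cs.inv_simple, mul_assoc,
          cs.simple_mul_simple_cancel_left]
      rw [hcancel, hphi, hπcons]
      exact ⟨by omega, ihle⟩
    · -- `s i` shortens `z'`; use the lifting lemma
      have hphi : phiWord cs (i :: ω) y = z' := by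
        rw [hphiw, phi_eq, if_neg (by omega)]
      have hz'eq : u * (u⁻¹ * z') = z' := by group
      obtain ⟨t, htrefl, hteq, htlen⟩ :=
        descent_lift cs u (u⁻¹ * z') i hu1 (by rw [hz'eq]; exact ihlen)
          (by rw [hz'eq]; omega)
      have hkey : (cs.wordProd (i :: ω))⁻¹ * phiWord cs (i :: ω) y = t * (u⁻¹ * z') := by
        rw [hphi, hπcons, mul_inv_rev, cs.inv_simple]
        rw [hz'eq] at hteq
        -- hteq : s i * z' = u * (t * (u⁻¹ * z'))
        rw [mul_assoc, hteq, inv_mul_cancel_left]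
      rw [hkey, hphi, hπcons]
      constructor
      · omega
      · have hcov : BruhatCov cs (t * (u⁻¹ * z')) (u⁻¹ * z') := by
          refine ⟨by omega, t, htrefl, ?_⟩
          rw [← mul_assoc, htrefl.mul_self, one_mul]
        exact Relation.ReflTransGen.head hcov ihle

end MainAux

/-- If `x * y = z` in the Demazure product (i.e. `z = φ_x(y)`, computed along any
reduced word `ω` for `x`), and `y' = x⁻¹ z`, then `y' ≤_L z`, `ℓ z = ℓ x + ℓ y'`,
and `y' ≤ y` in the Bruhat order. -/
theorem stmt12 (cs : CoxeterSystem M W) (x y z : W) (ω : List B)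
    (hred : cs.IsReduced ω) (hω : cs.wordProd ω = x)
    (hz : phiWord cs ω y = z) :
    leftLe cs (x⁻¹ * z) z ∧
      cs.length z = cs.length x + cs.length (x⁻¹ * z) ∧
      BruhatLe cs (x⁻¹ * z) y := by
  subst hω
  subst hz
  obtain ⟨hlen, hle⟩ := main_aux ω hred y
  have hx : phiWord cs ω y * ((cs.wordProd ω)⁻¹ * phiWord cs ω y)⁻¹ = cs.wordProd ω := by
    group
  refine ⟨?_, hlen, hle⟩
  unfold leftLe
  rw [hx]
  omega
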